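/- There exists a constant c' > 0 such that for every bounded Lipschitz continuous function w_0 : ℝ → ℝ with Lipschitz constant K, the function u(x, t) = ∫_ℝ E(x − y, t) w_0(y) dy satisfies |∂_t u(x, t)| ≤ c' K t^{−1/2} for all x ∈ ℝ and all t > 0. -/

import Mathlib

open MeasureTheory

/-- The Gauss kernel `E(x,t) = (4πt)^{−1/2} e^{−x²/(4t)}`. -/
noncomputable def gaussE (x t : ℝ) : ℝ :=
  (4 * Real.pi * t) ^ (-(1 : ℝ) / 2) * Real.exp (-x ^ 2 / (4 * t))

open Real

noncomputable def gaussE' (z t : ℝ) : ℝ :=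
  gaussE z t * (z ^ 2 / (4 * t ^ 2) - 1 / (2 * t))

lemma gaussE_eq (z s : ℝ) :
    gaussE z s = (4 * π * s) ^ (-(1 : ℝ) / 2) * Real.exp (-(1 / (4 * s)) * z ^ 2) := by
  unfold gaussE
  rw [show -z ^ 2 / (4 * s) = -(1 / (4 * s)) * z ^ 2 by ring]

lemma gaussE_pos {s : ℝ} (hs : 0 < s) (z : ℝ) : 0 < gaussE z s := by
  unfold gaussE
  have : 0 < 4 * π * s := by positivity
  positivity

lemma hasDerivAt_gaussE (z : ℝ) {s : ℝ} (hs : 0 < s) :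
    HasDerivAt (fun r => gaussE z r) (gaussE' z s) s := by
  have h4 : 0 < 4 * π * s := by positivity
  have h1 : HasDerivAt (fun r : ℝ => 4 * π * r) (4 * π) s := by
    simpa using (hasDerivAt_id s).const_mul (4 * π)
  have h2 : HasDerivAt (fun r : ℝ => (4 * π * r) ^ (-(1 : ℝ) / 2))
      (4 * π * (-(1 : ℝ) / 2) * (4 * π * s) ^ ((-(1 : ℝ) / 2) - 1)) s :=
    h1.rpow_const (Or.inl h4.ne')
  have h3 : HasDerivAt (fun r : ℝ => -z ^ 2 / (4 * r)) (z ^ 2 / (4 * s ^ 2)) s := by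
    have := (hasDerivAt_inv hs.ne').const_mul (-z ^ 2 / 4)
    have heq : (fun r : ℝ => -z ^ 2 / 4 * r⁻¹) = fun r : ℝ => -z ^ 2 / (4 * r) := by
      funext r; rw [div_eq_mul_inv (-z^2) (4*r), mul_inv]; ring
    rw [heq] at this
    refine this.congr_deriv (Eq.symm ?_)
    ring
  have h5 : HasDerivAt (fun r : ℝ => Real.exp (-z ^ 2 / (4 * r)))
      (Real.exp (-z ^ 2 / (4 * s)) * (z ^ 2 / (4 * s ^ 2))) s := h3.exp
  have := h2.mul h5
  refine this.congr_deriv (Eq.symm ?_)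
  unfold gaussE' gaussE
  rw [show (-(1 : ℝ) / 2) - 1 = (-(1 : ℝ) / 2) + (-1) by norm_num,
    Real.rpow_add h4, Real.rpow_neg_one]
  field_simp
  ring

lemma gaussE'_abs_le {s : ℝ} (hs : 0 < s) (z : ℝ) :
    |gaussE' z s| ≤ (4 * π * s) ^ (-(1 : ℝ) / 2) * Real.exp (-z ^ 2 / (4 * s)) *
      (1 / (2 * s) + z ^ 2 / (4 * s ^ 2)) := by
  unfold gaussE'
  rw [abs_mul, abs_of_pos (gaussE_pos hs z)]
  unfold gaussE
  have h1 : |z ^ 2 / (4 * s ^ 2) - 1 / (2 * s)| ≤ 1 / (2 * s) + z ^ 2 / (4 * s ^ 2) := by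
    rw [abs_sub_comm]
    refine (abs_sub _ _).trans ?_
    rw [abs_of_pos (by positivity), abs_of_nonneg (by positivity)]
  calc (4 * π * s) ^ (-(1 : ℝ) / 2) * Real.exp (-z ^ 2 / (4 * s)) *
        |z ^ 2 / (4 * s ^ 2) - 1 / (2 * s)|
      ≤ (4 * π * s) ^ (-(1 : ℝ) / 2) * Real.exp (-z ^ 2 / (4 * s)) *
        (1 / (2 * s) + z ^ 2 / (4 * s ^ 2)) := by
        have h2 : (0:ℝ) < 4 * π * s := by positivity
        exact mul_le_mul_of_nonneg_left h1 (by positivity)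

noncomputable def boundFn (t z : ℝ) : ℝ :=
  (2 * π * t) ^ (-(1 : ℝ) / 2) * Real.exp (-z ^ 2 / (6 * t)) * (1 / t + z ^ 2 / t ^ 2)

lemma boundFn_nonneg {t : ℝ} (ht : 0 < t) (z : ℝ) : 0 ≤ boundFn t z := by
  unfold boundFn; positivity

lemma gaussE'_bound {t s : ℝ} (ht : 0 < t) (hs : s ∈ Metric.ball t (t / 2)) (z : ℝ) :
    |gaussE' z s| ≤ boundFn t z := by
  rw [Metric.mem_ball, Real.dist_eq, abs_lt] at hs
  have hs1 : t / 2 < s := by linarith [hs.1]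
  have hs2 : s < 3 * t / 2 := by linarith [hs.2]
  have hs0 : 0 < s := by linarith
  refine (gaussE'_abs_le hs0 z).trans ?_
  unfold boundFn
  have hA : (4 * π * s) ^ (-(1 : ℝ) / 2) ≤ (2 * π * t) ^ (-(1 : ℝ) / 2) := by
    refine Real.rpow_le_rpow_of_nonpos (by positivity) ?_ (by norm_num)
    nlinarith [Real.pi_pos]
  have hE : Real.exp (-z ^ 2 / (4 * s)) ≤ Real.exp (-z ^ 2 / (6 * t)) := by
    rw [Real.exp_le_exp]
    rw [neg_div, neg_div, neg_le_neg_iff]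
    apply div_le_div_of_nonneg_left (by positivity) (by positivity)
    linarith
  have hP : 1 / (2 * s) + z ^ 2 / (4 * s ^ 2) ≤ 1 / t + z ^ 2 / t ^ 2 := by
    have h1 : 1 / (2 * s) ≤ 1 / t := by
      apply div_le_div_of_nonneg_left (by norm_num) (by positivity); linarith
    have h2 : z ^ 2 / (4 * s ^ 2) ≤ z ^ 2 / t ^ 2 := by
      apply div_le_div_of_nonneg_left (by positivity) (by positivity); nlinarith
    linarith
  have hAe : (0:ℝ) ≤ (4 * π * s) ^ (-(1 : ℝ) / 2) := by positivity
  have := mul_le_mul (mul_le_mul hA hE (Real.exp_nonneg _) (by positivity)) hP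
    (by positivity) (by positivity)
  exact this

lemma integrable_sq_exp {b : ℝ} (hb : 0 < b) :
    Integrable (fun z : ℝ => z ^ 2 * Real.exp (-b * z ^ 2)) := by
  have := integrable_rpow_mul_exp_neg_mul_sq hb (s := 2) (by norm_num)
  have heq : (fun z : ℝ => z ^ (2:ℝ) * Real.exp (-b * z ^ 2))
      = fun z : ℝ => z ^ 2 * Real.exp (-b * z ^ 2) := by
    funext z
    rw [show (2:ℝ) = ((2:ℕ):ℝ) by norm_num, Real.rpow_natCast]
  rwa [heq] at this

lemma integrable_boundFn {t : ℝ} (ht : 0 < t) : Integrable (boundFn t) := by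
  have hb : (0:ℝ) < 1 / (6 * t) := by positivity
  have h1 := integrable_exp_neg_mul_sq hb
  have h2 := integrable_sq_exp hb
  have heq : boundFn t = fun z =>
      ((2 * π * t) ^ (-(1 : ℝ) / 2) * (1 / t)) * Real.exp (-(1 / (6 * t)) * z ^ 2)
      + ((2 * π * t) ^ (-(1 : ℝ) / 2) * (1 / t ^ 2)) *
        (z ^ 2 * Real.exp (-(1 / (6 * t)) * z ^ 2)) := by
    funext z
    unfold boundFn
    rw [show -z ^ 2 / (6 * t) = -(1 / (6 * t)) * z ^ 2 by ring]
    ring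
  rw [heq]
  exact (h1.const_mul _).add (h2.const_mul _)

lemma integrable_gaussE {s : ℝ} (hs : 0 < s) : Integrable (fun z => gaussE z s) := by
  have hb : (0:ℝ) < 1 / (4 * s) := by positivity
  simp_rw [gaussE_eq]
  exact (integrable_exp_neg_mul_sq hb).const_mul _

lemma integral_gaussE {s : ℝ} (hs : 0 < s) : ∫ z : ℝ, gaussE z s = 1 := by
  have hb : (0:ℝ) < 1 / (4 * s) := by positivity
  simp_rw [gaussE_eq]
  rw [MeasureTheory.integral_const_mul, integral_gaussian,
    show π / (1 / (4 * s)) = 4 * π * s by field_simp,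
    Real.sqrt_eq_rpow, ← Real.rpow_add (by positivity)]
  norm_num

lemma continuous_gaussE (x s : ℝ) : Continuous fun y : ℝ => gaussE (x - y) s := by
  unfold gaussE
  exact continuous_const.mul (Real.continuous_exp.comp (by fun_prop))

lemma continuous_gaussE' (x s : ℝ) : Continuous fun y : ℝ => gaussE' (x - y) s := by
  unfold gaussE'
  exact (continuous_gaussE x s).mul (by fun_prop)

lemma key (x : ℝ) {t : ℝ} (ht : 0 < t) (w : ℝ → ℝ) (hw : Continuous w) (M : ℝ)
    (hM : ∀ y, |w y| ≤ M) :
    Integrable (fun y => gaussE' (x - y) t * w y) ∧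
      HasDerivAt (fun s => ∫ y : ℝ, gaussE (x - y) s * w y)
        (∫ y : ℝ, gaussE' (x - y) t * w y) t := by
  have hM0 : 0 ≤ M := (abs_nonneg _).trans (hM 0)
  have hband : Integrable (fun y : ℝ => boundFn t (x - y) * M) :=
    ((integrable_boundFn ht).comp_sub_left x).mul_const M
  have h := hasDerivAt_integral_of_dominated_loc_of_deriv_le (μ := volume)
    (F := fun s y => gaussE (x - y) s * w y)
    (F' := fun s y => gaussE' (x - y) s * w y)
    (bound := fun y => boundFn t (x - y) * M)
    (x₀ := t) (s := Metric.ball t (t / 2)) (Metric.ball_mem_nhds t (by positivity))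
    (Filter.Eventually.of_forall fun s =>
      (((continuous_gaussE x s).mul hw).aestronglyMeasurable))
    ?_
    (((continuous_gaussE' x t).mul hw).aestronglyMeasurable)
    (Filter.Eventually.of_forall fun y s hs => ?_)
    hband
    (Filter.Eventually.of_forall fun y s hs => ?_)
  · exact ⟨h.1, h.2⟩
  · -- integrability of F t
    have hg := (integrable_gaussE ht).comp_sub_left x
    have := Integrable.bdd_mul hg hw.aestronglyMeasurable
      (c := M) (Filter.Eventually.of_forall fun y => by rw [Real.norm_eq_abs]; exact hM y)
    simpa [mul_comm] using this
  · -- bound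
    rw [Real.norm_eq_abs, abs_mul]
    exact mul_le_mul (gaussE'_bound ht hs (x - y)) (hM y) (abs_nonneg _)
      (boundFn_nonneg ht _)
  · -- differentiability
    rw [Metric.mem_ball, Real.dist_eq, abs_lt] at hs
    have hs0 : 0 < s := by linarith [hs.1]
    exact (hasDerivAt_gaussE (x - y) hs0).mul_const (w y)

lemma integral_gaussE' {t : ℝ} (ht : 0 < t) : ∫ z : ℝ, gaussE' z t = 0 := by
  have h := key 0 ht (fun _ => 1) continuous_const 1 (by simp)
  have heq : (fun s => ∫ y : ℝ, gaussE (0 - y) s * 1) =ᶠ[nhds t] fun _ => (1:ℝ) := by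
    filter_upwards [eventually_gt_nhds ht] with s hs
    simp only [mul_one]
    rw [integral_sub_left_eq_self (fun z => gaussE z s) volume 0]
    exact integral_gaussE hs
  have h0 : HasDerivAt (fun s => ∫ y : ℝ, gaussE (0 - y) s * 1) 0 t :=
    (hasDerivAt_const t (1:ℝ)).congr_of_eventuallyEq heq
  have hz : ∫ y : ℝ, gaussE' (0 - y) t * 1 = 0 := h.2.unique h0
  calc ∫ z : ℝ, gaussE' z t = ∫ y : ℝ, gaussE' (0 - y) t :=
        (integral_sub_left_eq_self (fun z => gaussE' z t) volume 0).symm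
    _ = ∫ y : ℝ, gaussE' (0 - y) t * 1 := by simp
    _ = 0 := hz

lemma moment1 {t : ℝ} (ht : 0 < t) (z : ℝ) :
    |z| * Real.exp (-(1 / (8 * t)) * z ^ 2) ≤ 2 * Real.sqrt t := by
  set a := Real.sqrt t with hadef
  have ha : 0 < a := Real.sqrt_pos.mpr ht
  have ha2 : a ^ 2 = t := Real.sq_sqrt ht.le
  set w := 1 / (8 * t) * z ^ 2 with hwdef
  have hw : 0 ≤ w := by positivity
  have hw8 : 8 * t * w = z ^ 2 := by rw [hwdef]; field_simp
  have he : 1 + w ≤ Real.exp w := by linarith [Real.add_one_le_exp w]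
  have h1 : |z| ≤ 2 * a * Real.exp w := by
    have h2 : |z| ≤ 2 * a * (1 + w) := by
      nlinarith [sq_nonneg (2 * a - |z|), sq_abs z, hw8, ha2, ha, abs_nonneg z]
    calc |z| ≤ 2 * a * (1 + w) := h2
      _ ≤ 2 * a * Real.exp w := by nlinarith [ha]
  rw [show -(1 / (8 * t)) * z ^ 2 = -w by rw [hwdef]; ring]
  calc |z| * Real.exp (-w) ≤ (2 * a * Real.exp w) * Real.exp (-w) :=
        mul_le_mul_of_nonneg_right h1 (Real.exp_nonneg _)
    _ = 2 * a := by rw [mul_assoc, ← Real.exp_add]; simp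

lemma moment3 {t : ℝ} (ht : 0 < t) (z : ℝ) :
    |z| ^ 3 * Real.exp (-(1 / (8 * t)) * z ^ 2) ≤ 128 * t * Real.sqrt t := by
  set a := Real.sqrt t with hadef
  have ha : 0 < a := Real.sqrt_pos.mpr ht
  have ha2 : a ^ 2 = t := Real.sq_sqrt ht.le
  set w := 1 / (8 * t) * z ^ 2 with hwdef
  have hw : 0 ≤ w := by positivity
  have hw8 : 8 * t * w = z ^ 2 := by rw [hwdef]; field_simp
  have hsq : 64 * t ^ 2 * w ^ 2 = z ^ 4 := by
    rw [show (64:ℝ) * t ^ 2 * w ^ 2 = (8 * t * w) ^ 2 by ring, hw8]; ring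
  have ht2 : t ^ 2 = a ^ 4 := by rw [← ha2]; ring
  have hg : (1 + w / 2) ^ 2 ≤ Real.exp w := by
    have h := Real.add_one_le_exp (w / 2)
    have h2 : (w / 2 + 1) ^ 2 ≤ (Real.exp (w / 2)) ^ 2 := by
      apply pow_le_pow_left₀ (by linarith) h
    calc (1 + w / 2) ^ 2 = (w / 2 + 1) ^ 2 := by ring
      _ ≤ (Real.exp (w / 2)) ^ 2 := h2
      _ = Real.exp w := by rw [sq, ← Real.exp_add]; norm_num
  have h1 : |z| ^ 3 ≤ 128 * a ^ 3 * Real.exp w := by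
    rcases le_or_gt |z| (2 * a) with hc | hc
    · have := pow_le_pow_left₀ (abs_nonneg z) hc 3
      have he1 : (1:ℝ) ≤ Real.exp w := Real.one_le_exp hw
      nlinarith [ha]
    · have hq : w ^ 2 / 4 ≤ Real.exp w := by nlinarith [hg]
      have h3 : 2 * a * |z| ^ 3 ≤ |z| ^ 4 := by
        nlinarith [pow_nonneg (abs_nonneg z) 3]
      have h4 : |z| ^ 4 = z ^ 4 := by rw [← abs_pow]; exact abs_of_nonneg (by positivity)
      nlinarith [mul_le_mul_of_nonneg_left hq (by positivity : (0:ℝ) ≤ 128 * a ^ 3),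
        hsq, ht2, ha, pow_nonneg (abs_nonneg z) 3]
  rw [show -(1 / (8 * t)) * z ^ 2 = -w by rw [hwdef]; ring]
  calc |z| ^ 3 * Real.exp (-w) ≤ (128 * a ^ 3 * Real.exp w) * Real.exp (-w) :=
        mul_le_mul_of_nonneg_right h1 (Real.exp_nonneg _)
    _ = 128 * a ^ 3 := by rw [mul_assoc, ← Real.exp_add]; simp
    _ = 128 * t * a := by rw [← ha2]; ring

lemma core {t : ℝ} (ht : 0 < t) (z : ℝ) :
    |gaussE' z t| * |z| ≤ (33 / Real.sqrt t) *
      ((4 * π * t) ^ (-(1 : ℝ) / 2) * Real.exp (-(1 / (8 * t)) * z ^ 2)) := by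
  set a := Real.sqrt t with hadef
  have ha : 0 < a := Real.sqrt_pos.mpr ht
  have ha2 : a ^ 2 = t := Real.sq_sqrt ht.le
  have hC : (0:ℝ) ≤ (4 * π * t) ^ (-(1 : ℝ) / 2) := by positivity
  have hEx : Real.exp (-z ^ 2 / (4 * t)) =
      Real.exp (-(1 / (8 * t)) * z ^ 2) * Real.exp (-(1 / (8 * t)) * z ^ 2) := by
    rw [← Real.exp_add]; congr 1; field_simp; ring
  have h0 := gaussE'_abs_le ht z
  have hm1 := moment1 ht z
  have hm3 := moment3 ht z
  set Ex := Real.exp (-(1 / (8 * t)) * z ^ 2) with hExdef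
  have hExnn : 0 ≤ Ex := Real.exp_nonneg _
  have hmain : Ex * (1 / (2 * t) + z ^ 2 / (4 * t ^ 2)) * |z| ≤ 33 / a := by
    have heq : Ex * (1 / (2 * t) + z ^ 2 / (4 * t ^ 2)) * |z|
        = (|z| * Ex) / (2 * t) + (|z| ^ 3 * Ex) / (4 * t ^ 2) := by
      rw [show |z| ^ 3 = z ^ 2 * |z| by rw [← sq_abs z]; ring]
      ring
    have hsum : (|z| * Ex) / (2 * t) + (|z| ^ 3 * Ex) / (4 * t ^ 2)
        ≤ (2 * a) / (2 * t) + (128 * t * a) / (4 * t ^ 2) := by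
      gcongr
    have hval : (2 * a) / (2 * t) + (128 * t * a) / (4 * t ^ 2) = 33 / a := by
      rw [← ha2]; field_simp; ring
    rw [heq]; rw [hval] at hsum; exact hsum
  calc |gaussE' z t| * |z|
      ≤ ((4 * π * t) ^ (-(1 : ℝ) / 2) * Real.exp (-z ^ 2 / (4 * t)) *
          (1 / (2 * t) + z ^ 2 / (4 * t ^ 2))) * |z| :=
        mul_le_mul_of_nonneg_right h0 (abs_nonneg z)
    _ = ((4 * π * t) ^ (-(1 : ℝ) / 2) * Ex) *
          (Ex * (1 / (2 * t) + z ^ 2 / (4 * t ^ 2)) * |z|) := by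
        rw [hEx]; ring
    _ ≤ ((4 * π * t) ^ (-(1 : ℝ) / 2) * Ex) * (33 / a) := by
        apply mul_le_mul_of_nonneg_left hmain (by positivity)
    _ = (33 / a) * ((4 * π * t) ^ (-(1 : ℝ) / 2) * Ex) := by ring

/-- There is a universal constant `c' > 0` such that for every
bounded Lipschitz `w₀` with Lipschitz constant `K`, the heat extension
`u(x,t) = ∫_ℝ E(x−y,t) w₀(y) dy` satisfies `|∂_t u(x,t)| ≤ c' K t^{−1/2}`. -/
theorem stmt18 :
    ∃ c' : ℝ, 0 < c' ∧
      ∀ (w₀ : ℝ → ℝ) (K : ℝ),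
        (∀ x y : ℝ, |w₀ x - w₀ y| ≤ K * |x - y|) →
        (∃ M, ∀ x : ℝ, |w₀ x| ≤ M) →
        ∀ (x : ℝ), ∀ t > (0 : ℝ), ∃ D : ℝ,
          HasDerivAt (fun s => ∫ y : ℝ, gaussE (x - y) s * w₀ y) D t ∧
          |D| ≤ c' * K / Real.sqrt t := by
  refine ⟨50, by norm_num, ?_⟩
  intro w₀ K hK hMex x t ht
  obtain ⟨M, hM⟩ := hMex
  have hK0 : 0 ≤ K := by
    have h1 := hK 0 1
    have h2 : (0:ℝ) ≤ K * |0 - 1| := le_trans (abs_nonneg _) h1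
    simpa using h2
  have hw : Continuous w₀ := by
    have hl : LipschitzWith (Real.toNNReal K) w₀ := by
      apply LipschitzWith.of_dist_le_mul
      intro a b
      rw [Real.dist_eq, Real.dist_eq]
      calc |w₀ a - w₀ b| ≤ K * |a - b| := hK a b
        _ ≤ (Real.toNNReal K : ℝ) * |a - b| :=
          mul_le_mul_of_nonneg_right (Real.le_coe_toNNReal K) (abs_nonneg _)
    exact hl.continuous
  obtain ⟨hint, hder⟩ := key x ht w₀ hw M hM
  refine ⟨_, hder, ?_⟩
  set a := Real.sqrt t with hadef
  have ha : 0 < a := Real.sqrt_pos.mpr ht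
  have ha2 : a ^ 2 = t := Real.sq_sqrt ht.le
  have hgint : Integrable (fun y : ℝ => gaussE' (x - y) t) := by
    have := (key x ht (fun _ => 1) continuous_const 1 (by simp)).1
    simpa using this
  have hzero : ∫ y : ℝ, gaussE' (x - y) t = 0 := by
    rw [integral_sub_left_eq_self (fun z => gaussE' z t) volume x]
    exact integral_gaussE' ht
  have hI : (∫ y : ℝ, gaussE' (x - y) t * w₀ y)
      = ∫ y : ℝ, gaussE' (x - y) t * (w₀ y - w₀ x) := by
    have h1 : ∫ y : ℝ, gaussE' (x - y) t * (w₀ y - w₀ x)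
        = (∫ y : ℝ, gaussE' (x - y) t * w₀ y)
          - ∫ y : ℝ, gaussE' (x - y) t * w₀ x := by
      simp_rw [mul_sub]
      exact integral_sub hint (hgint.mul_const _)
    rw [h1, integral_mul_const, hzero]
    ring
  rw [hI]
  have hb8 : (0:ℝ) < 1 / (8 * t) := by positivity
  have hgauss8 : Integrable (fun y : ℝ => Real.exp (-(1 / (8 * t)) * (x - y) ^ 2)) :=
    (integrable_exp_neg_mul_sq hb8).comp_sub_left x
  set C := (4 * π * t) ^ (-(1 : ℝ) / 2) with hCdef
  have hCpos : (0:ℝ) < C := by rw [hCdef]; positivity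
  have hptwise : ∀ y : ℝ, |gaussE' (x - y) t * (w₀ y - w₀ x)|
      ≤ (K * (33 / a) * C) * Real.exp (-(1 / (8 * t)) * (x - y) ^ 2) := by
    intro y
    rw [abs_mul]
    calc |gaussE' (x - y) t| * |w₀ y - w₀ x|
        ≤ |gaussE' (x - y) t| * (K * |y - x|) :=
          mul_le_mul_of_nonneg_left (hK y x) (abs_nonneg _)
      _ = K * (|gaussE' (x - y) t| * |x - y|) := by rw [abs_sub_comm]; ring
      _ ≤ K * ((33 / a) * (C * Real.exp (-(1 / (8 * t)) * (x - y) ^ 2))) :=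
          mul_le_mul_of_nonneg_left (core ht (x - y)) hK0
      _ = (K * (33 / a) * C) * Real.exp (-(1 / (8 * t)) * (x - y) ^ 2) := by ring
  have habs : |∫ y : ℝ, gaussE' (x - y) t * (w₀ y - w₀ x)|
      ≤ ∫ y : ℝ, |gaussE' (x - y) t * (w₀ y - w₀ x)| := by
    simpa only [Real.norm_eq_abs] using
      norm_integral_le_integral_norm (fun y : ℝ => gaussE' (x - y) t * (w₀ y - w₀ x))
  have hmono : (∫ y : ℝ, |gaussE' (x - y) t * (w₀ y - w₀ x)|)
      ≤ ∫ y : ℝ, (K * (33 / a) * C) * Real.exp (-(1 / (8 * t)) * (x - y) ^ 2) := by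
    apply integral_mono_of_nonneg
    · exact Filter.Eventually.of_forall fun y => abs_nonneg _
    · exact hgauss8.const_mul _
    · exact Filter.Eventually.of_forall hptwise
  have hval : ∫ y : ℝ, (K * (33 / a) * C) * Real.exp (-(1 / (8 * t)) * (x - y) ^ 2)
      = (K * (33 / a) * C) * Real.sqrt (8 * π * t) := by
    rw [MeasureTheory.integral_const_mul,
      integral_sub_left_eq_self (fun z => Real.exp (-(1 / (8 * t)) * z ^ 2)) volume x,
      integral_gaussian, show π / (1 / (8 * t)) = 8 * π * t by field_simp]
  have hfinal : (K * (33 / a) * C) * Real.sqrt (8 * π * t) ≤ 50 * K / a := by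
    have hCval : C = (Real.sqrt (4 * π * t))⁻¹ := by
      rw [hCdef, show (-(1:ℝ) / 2) = -(1 / 2 : ℝ) by norm_num,
        Real.rpow_neg (by positivity), ← Real.sqrt_eq_rpow]
    have h8 : Real.sqrt (8 * π * t) = Real.sqrt 2 * Real.sqrt (4 * π * t) := by
      rw [show (8:ℝ) * π * t = 2 * (4 * π * t) by ring, Real.sqrt_mul (by norm_num)]
    have h4pos : (0:ℝ) < Real.sqrt (4 * π * t) := Real.sqrt_pos.mpr (by positivity)
    rw [hCval, h8]
    have hsqrt2 : Real.sqrt 2 ≤ 1.5 := by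
      nlinarith [Real.sq_sqrt (by norm_num : (0:ℝ) ≤ 2), Real.sqrt_nonneg 2]
    have : K * (33 / a) * (Real.sqrt (4 * π * t))⁻¹ * (Real.sqrt 2 * Real.sqrt (4 * π * t))
        = 33 * Real.sqrt 2 * K / a := by
      field_simp
    rw [this]
    rw [div_le_div_iff₀ ha ha]
    nlinarith [Real.sqrt_nonneg 2, ha, hK0,
      mul_nonneg (mul_nonneg hK0 ha.le) (by linarith : (0:ℝ) ≤ 1.5 - Real.sqrt 2)]
  calc |∫ y : ℝ, gaussE' (x - y) t * (w₀ y - w₀ x)|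
      ≤ ∫ y : ℝ, |gaussE' (x - y) t * (w₀ y - w₀ x)| := habs
    _ ≤ ∫ y : ℝ, (K * (33 / a) * C) * Real.exp (-(1 / (8 * t)) * (x - y) ^ 2) := hmono
    _ = (K * (33 / a) * C) * Real.sqrt (8 * π * t) := hval
    _ ≤ 50 * K / a := hfinal
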